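/- Let G be a graph in the family T_m (m ≥ 2): G consists of three graphs H_1, H_2, H_3, each a disjoint union of m edges, together with, for each triple (x_1, x_2, x_3) with x_i ∈ V(H_i), an independent set I_{(x_1,x_2,x_3)} of size at least m whose vertices are joined to x_1, x_2, and x_3. Then γ_{3rt}(G) = (3/2) · γ(G). -/

import Mathlib

open SimpleGraph Finset

/-- `f` is a `k`-rainbow dominating function of `G`: every vertex with empty label
sees all colors of `Fin k` among its neighbors' labels. -/
def IsKRDF {V : Type*} (G : SimpleGraph V) (k : ℕ) (f : V → Finset (Fin k)) : Prop :=
  ∀ v, f v = ∅ → ∀ i : Fin k, ∃ u, G.Adj v u ∧ i ∈ f u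

/-- `f` is a `k`-rainbow total dominating function of `G`: a `k`RDF such that every
vertex labeled by a singleton `{i}` has a neighbor whose label contains `i`. -/
def IsKRTDF {V : Type*} (G : SimpleGraph V) (k : ℕ) (f : V → Finset (Fin k)) : Prop :=
  IsKRDF G k f ∧ ∀ v (i : Fin k), f v = {i} → ∃ u, G.Adj v u ∧ i ∈ f u

/-- The `k`-rainbow domination number of `G`. -/
noncomputable def rdnum {V : Type*} [Fintype V] (G : SimpleGraph V) (k : ℕ) : ℕ :=
  sInf {n | ∃ f : V → Finset (Fin k), IsKRDF G k f ∧ ∑ v, (f v).card = n}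

/-- The `k`-rainbow total domination number of `G`. -/
noncomputable def rtdnum {V : Type*} [Fintype V] (G : SimpleGraph V) (k : ℕ) : ℕ :=
  sInf {n | ∃ f : V → Finset (Fin k), IsKRTDF G k f ∧ ∑ v, (f v).card = n}

/-- The domination number of `G`. -/
noncomputable def domnum {V : Type*} [Fintype V] (G : SimpleGraph V) : ℕ :=
  sInf {n | ∃ D : Finset V, (∀ v ∉ D, ∃ u ∈ D, G.Adj u v) ∧ D.card = n}

/-- The total domination number of `G`. -/
noncomputable def totdomnum {V : Type*} [Fintype V] (G : SimpleGraph V) : ℕ :=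
  sInf {n | ∃ D : Finset V, (∀ v, ∃ u ∈ D, G.Adj u v) ∧ D.card = n}

/-- A graph in the family `T_m`. It consists of three graphs `H_1, H_2, H_3`
(indexed by `Fin 3`), each a disjoint union of `m` edges (on vertices
`Fin (2*m)`, where `2j` is matched with `2j+1`), together with, for each triple
`t = (x₁, x₂, x₃)` with `xᵢ ∈ V(Hᵢ)`, an independent set `I_t` of size `s t ≥ m`
whose vertices are joined to `x₁`, `x₂` and `x₃`. -/
def Tgraph (m : ℕ) (s : Fin (2 * m) × Fin (2 * m) × Fin (2 * m) → ℕ) :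
    SimpleGraph ((Fin 3 × Fin (2 * m)) ⊕ (Σ t : Fin (2 * m) × Fin (2 * m) × Fin (2 * m), Fin (s t))) :=
  SimpleGraph.fromRel (fun u v =>
    match u, v with
    | Sum.inl (i, j), Sum.inl (i', j') => i = i' ∧ j ≠ j' ∧ (j : ℕ) / 2 = (j' : ℕ) / 2
    | Sum.inl (i, j), Sum.inr ⟨(x1, x2, x3), _⟩ =>
        (i = 0 ∧ j = x1) ∨ (i = 1 ∧ j = x2) ∨ (i = 2 ∧ j = x3)
    | _, _ => False)

section TgraphAux

open Sum

def Tpar {m : ℕ} (j : Fin (2*m)) : Fin (2*m) :=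
  ⟨2*((j:ℕ)/2) + (1 - (j:ℕ)%2), by have := j.isLt; omega⟩

lemma Tpar_ne {m : ℕ} (j : Fin (2*m)) : Tpar j ≠ j := by
  simp only [Tpar, Ne, Fin.ext_iff]
  have := j.isLt; omega

lemma Tpar_div {m : ℕ} (j : Fin (2*m)) : ((Tpar j : ℕ))/2 = (j:ℕ)/2 := by
  simp only [Tpar]; omega

lemma Tpar_even {m : ℕ} (j : Fin (2*m)) (h : (j:ℕ) % 2 = 1) : ((Tpar j : ℕ)) % 2 = 0 := by
  simp only [Tpar]; omega

lemma eq_Tpar_of {m : ℕ} (j j' : Fin (2*m)) (h1 : j ≠ j') (h2 : (j:ℕ)/2=(j':ℕ)/2) :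
    j' = Tpar j := by
  rw [Ne, Fin.ext_iff] at h1
  rw [Fin.ext_iff]
  simp only [Tpar]
  omega

def Tcoord {m : ℕ} (c : Fin 3) (t : Fin (2*m) × Fin (2*m) × Fin (2*m)) : Fin (2*m) :=
  if c = 0 then t.1 else if c = 1 then t.2.1 else t.2.2

variable {m : ℕ} {s : Fin (2 * m) × Fin (2 * m) × Fin (2 * m) → ℕ}

lemma adj_inl_inl {i i' : Fin 3} {j j' : Fin (2*m)} :
    (Tgraph m s).Adj (inl (i,j)) (inl (i',j')) ↔ i = i' ∧ j ≠ j' ∧ (j:ℕ)/2 = (j':ℕ)/2 := by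
  simp only [Tgraph, fromRel_adj]
  constructor
  · rintro ⟨-, h | h⟩
    · exact h
    · exact ⟨h.1.symm, h.2.1.symm, h.2.2.symm⟩
  · rintro ⟨h1, h2, h3⟩
    exact ⟨by simp [h2], Or.inl ⟨h1, h2, h3⟩⟩

lemma adj_inl_inr {i : Fin 3} {j : Fin (2*m)} {t : Fin (2*m) × Fin (2*m) × Fin (2*m)}
    {a : Fin (s t)} :
    (Tgraph m s).Adj (inl (i,j)) (inr ⟨t,a⟩) ↔ j = Tcoord i t := by
  obtain ⟨x1, x2, x3⟩ := t
  simp only [Tgraph, fromRel_adj, Tcoord]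
  constructor
  · rintro ⟨-, h | h⟩
    · rcases h with ⟨h1, h2⟩ | ⟨h1, h2⟩ | ⟨h1, h2⟩ <;> subst h1 <;> simp [h2]
    · exact h.elim
  · intro h
    refine ⟨by simp, Or.inl ?_⟩
    fin_cases i <;> simp_all

lemma not_adj_inr_inr {x y : Σ t : Fin (2 * m) × Fin (2 * m) × Fin (2 * m), Fin (s t)} :
    ¬ (Tgraph m s).Adj (inr x) (inr y) := by
  obtain ⟨⟨x1,x2,x3⟩, a⟩ := x
  obtain ⟨⟨y1,y2,y3⟩, b⟩ := y
  simp [Tgraph, fromRel_adj]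

lemma Tcoord_zero {m : ℕ} (t : Fin (2*m) × Fin (2*m) × Fin (2*m)) : Tcoord 0 t = t.1 := rfl
lemma Tcoord_one {m : ℕ} (t : Fin (2*m) × Fin (2*m) × Fin (2*m)) : Tcoord 1 t = t.2.1 := rfl
lemma Tcoord_two {m : ℕ} (t : Fin (2*m) × Fin (2*m) × Fin (2*m)) : Tcoord 2 t = t.2.2 := rfl

lemma card_even (m : ℕ) :
    (univ.filter (fun j : Fin (2*m) => (j:ℕ) % 2 = 0)).card = m := by
  classical
  have himg : (univ.filter (fun j : Fin (2*m) => (j:ℕ) % 2 = 0)) =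
      univ.image (fun k : Fin m => (⟨2*(k:ℕ), by have := k.isLt; omega⟩ : Fin (2*m))) := by
    ext j
    simp only [mem_filter, mem_univ, true_and, mem_image, Fin.ext_iff]
    constructor
    · intro h
      have := j.isLt
      exact ⟨⟨(j:ℕ)/2, by omega⟩, by simp; omega⟩
    · rintro ⟨k, hk⟩
      omega
  rw [himg, Finset.card_image_of_injective _ (fun a b hab => by
    have : 2*(a:ℕ) = 2*(b:ℕ) := congrArg Fin.val hab
    exact Fin.ext (by omega)), Finset.card_univ, Fintype.card_fin]

variable (m : ℕ) (s : Fin (2 * m) × Fin (2 * m) × Fin (2 * m) → ℕ)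

/-- candidate dominating set -/
noncomputable def D0 : Finset ((Fin 3 × Fin (2 * m)) ⊕ (Σ t : Fin (2 * m) × Fin (2 * m) × Fin (2 * m), Fin (s t))) :=
  (univ.filter fun q : Fin 3 × Fin (2*m) => q.1 = 0 ∨ (q.2:ℕ) % 2 = 0).image inl

lemma D0_card : (D0 m s).card = 4*m := by
  classical
  rw [D0, Finset.card_image_of_injective _ Sum.inl_injective, Finset.card_filter,
    Fintype.sum_prod_type, Fin.sum_univ_three]
  have h0 : ∀ j : Fin (2*m), (if (0:Fin 3) = 0 ∨ (j:ℕ) % 2 = 0 then 1 else 0) = 1 := by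
    intro j; simp
  have h1 : ∀ j : Fin (2*m), (if (1:Fin 3) = 0 ∨ (j:ℕ) % 2 = 0 then (1:ℕ) else 0) =
      if (j:ℕ) % 2 = 0 then 1 else 0 := by
    intro j; simp [show (1:Fin 3) ≠ 0 by decide]
  have h2 : ∀ j : Fin (2*m), (if (2:Fin 3) = 0 ∨ (j:ℕ) % 2 = 0 then (1:ℕ) else 0) =
      if (j:ℕ) % 2 = 0 then 1 else 0 := by
    intro j; simp [show (2:Fin 3) ≠ 0 by decide]
  rw [Finset.sum_congr rfl (fun j _ => h0 j), Finset.sum_congr rfl (fun j _ => h1 j),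
    Finset.sum_congr rfl (fun j _ => h2 j), ← Finset.card_filter]
  rw [card_even, Finset.sum_const, Finset.card_univ, Fintype.card_fin, smul_eq_mul, mul_one]
  omega

lemma D0_dom : ∀ v ∉ (D0 m s), ∃ u ∈ (D0 m s), (Tgraph m s).Adj u v := by
  classical
  rintro (⟨i, j⟩ | ⟨t, a⟩) hv
  · have hmem : ¬ (i = 0 ∨ (j:ℕ) % 2 = 0) := by
      intro h
      exact hv (Finset.mem_image_of_mem _ (by simpa using h))
    push_neg at hmem
    refine ⟨inl (i, Tpar j), Finset.mem_image_of_mem _ (by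
      simp only [mem_filter, mem_univ, true_and]
      exact Or.inr (Tpar_even j (by omega))), ?_⟩
    exact adj_inl_inl.mpr ⟨rfl, Tpar_ne j, Tpar_div j⟩
  · refine ⟨inl (0, t.1), Finset.mem_image_of_mem _ (by simp), ?_⟩
    exact adj_inl_inr.mpr (by rw [Tcoord_zero])

/-- candidate 3RTDF -/
def f0 : ((Fin 3 × Fin (2 * m)) ⊕ (Σ t : Fin (2 * m) × Fin (2 * m) × Fin (2 * m), Fin (s t))) →
    Finset (Fin 3) :=
  Sum.elim (fun q => {q.1}) (fun _ => ∅)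

lemma f0_sum : ∑ v, ((f0 m s) v).card = 6*m := by
  rw [Fintype.sum_sum_type]
  simp only [f0, Sum.elim_inl, Sum.elim_inr, Finset.card_singleton, Finset.card_empty,
    Finset.sum_const, Finset.card_univ, Fintype.card_prod, Fintype.card_fin, smul_eq_mul,
    mul_one, Finset.sum_const_zero, add_zero]
  ring

lemma f0_krtdf : IsKRTDF (Tgraph m s) 3 (f0 m s) := by
  constructor
  · rintro (⟨i, j⟩ | ⟨t, a⟩) hv c
    · simp [f0] at hv
    · refine ⟨inl (c, Tcoord c t), (adj_inl_inr.mpr rfl).symm, ?_⟩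
      simp [f0]
  · rintro (⟨i, j⟩ | ⟨t, a⟩) c hv
    · simp only [f0, Sum.elim_inl, Finset.singleton_inj] at hv
      subst hv
      exact ⟨inl (i, Tpar j), adj_inl_inl.mpr ⟨rfl, (Tpar_ne j).symm, (Tpar_div j).symm⟩, by simp [f0]⟩
    · simp [f0] at hv

lemma sum_le_prod_add_two (x y z : ℕ) (hx : 1 ≤ x) (hy : 1 ≤ y) (hz : 1 ≤ z) :
    x + y + z ≤ x * y * z + 2 := by
  obtain ⟨a, rfl⟩ := Nat.exists_eq_add_of_le hx
  obtain ⟨b, rfl⟩ := Nat.exists_eq_add_of_le hy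
  obtain ⟨c, rfl⟩ := Nat.exists_eq_add_of_le hz
  nlinarith [Nat.zero_le (a*b*c), Nat.zero_le (a*b), Nat.zero_le (a*c), Nat.zero_le (b*c)]

lemma card_decomp (D : Finset ((Fin 3 × Fin (2 * m)) ⊕ (Σ t : Fin (2 * m) × Fin (2 * m) × Fin (2 * m), Fin (s t)))) :
    D.card = ∑ i : Fin 3, (univ.filter fun j => inl (i,j) ∈ D).card
      + (univ.filter fun x => inr x ∈ D).card := by
  classical
  have hD : D = univ.filter (· ∈ D) := by ext v; simp
  conv_lhs => rw [hD]
  rw [Finset.card_filter, Fintype.sum_sum_type, Fintype.sum_prod_type]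
  congr 1
  · exact Finset.sum_congr rfl fun i _ => (Finset.card_filter _ _).symm
  · exact (Finset.card_filter _ _).symm

lemma dom_lb (hm : 2 ≤ m)
    (D : Finset ((Fin 3 × Fin (2 * m)) ⊕ (Σ t : Fin (2 * m) × Fin (2 * m) × Fin (2 * m), Fin (s t))))
    (hs : ∀ t, m ≤ s t)
    (hdom : ∀ v ∉ D, ∃ u ∈ D, (Tgraph m s).Adj u v) : 4*m ≤ D.card := by
  classical
  by_cases hfull : ∃ i0 : Fin 3, ∀ j, inl (i0, j) ∈ D
  · obtain ⟨i0, hfull⟩ := hfull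
    haveI hne : Nonempty ((Fin 3 × Fin (2 * m)) ⊕ (Σ t : Fin (2 * m) × Fin (2 * m) × Fin (2 * m), Fin (s t))) :=
      ⟨inl (i0, ⟨0, by omega⟩)⟩
    have hex : ∀ p : Fin 3 × Fin (2*m), ∃ u, u ∈ D ∧
        (u = inl p ∨ (Tgraph m s).Adj u (inl p)) := by
      intro p
      by_cases hp : inl p ∈ D
      · exact ⟨inl p, hp, Or.inl rfl⟩
      · obtain ⟨u, hu, hadj⟩ := hdom _ hp
        exact ⟨u, hu, Or.inr hadj⟩
    set g := fun p : Fin 3 × Fin (2*m) => (hex p).choose with hgdef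
    have hgspec : ∀ p, g p ∈ D ∧ (g p = inl p ∨ (Tgraph m s).Adj (g p) (inl p)) :=
      fun p => (hex p).choose_spec
    set src := univ.filter (fun p : Fin 3 × Fin (2*m) => p.1 ≠ i0) with hsrc
    set tgt := D.filter (fun v => ∀ j' : Fin (2*m), v ≠ inl (i0, j')) with htgt
    have hmaps : ∀ p ∈ src, g p ∈ tgt := by
      rintro ⟨pi, pj⟩ hp
      rw [hsrc, mem_filter] at hp
      rw [htgt, mem_filter]
      refine ⟨(hgspec _).1, fun j' heq => ?_⟩
      rcases (hgspec (pi, pj)).2 with h | h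
      · rw [heq] at h
        simp only [Sum.inl.injEq, Prod.mk.injEq] at h
        exact hp.2 h.1.symm
      · rw [heq] at h
        rw [adj_inl_inl] at h
        exact hp.2 h.1.symm
    have hfib : ∀ v ∈ tgt, (src.filter fun p => g p = v).card ≤ 2 := by
      rintro (⟨i', j'⟩ | ⟨t, a⟩) hv
      · have hsub : (src.filter fun p => g p = inl (i', j')) ⊆
            {(i', j'), (i', Tpar j')} := by
          rintro ⟨pi, pj⟩ hp
          rw [mem_filter] at hp
          rcases (hgspec (pi, pj)).2 with h | h
          · rw [hp.2] at h
            simp only [Sum.inl.injEq] at h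
            simp [← h]
          · rw [hp.2, adj_inl_inl] at h
            have : pj = Tpar j' := eq_Tpar_of _ _ h.2.1 h.2.2
            simp [h.1, this]
        exact (Finset.card_le_card hsub).trans ((Finset.card_insert_le _ _).trans (by simp))
      · have hsub : (src.filter fun p => g p = inr ⟨t, a⟩) ⊆
            (univ.erase i0).image (fun c => (c, Tcoord c t)) := by
          rintro ⟨pi, pj⟩ hp
          rw [mem_filter] at hp
          have hpi : pi ≠ i0 := by
            have := hp.1; rw [hsrc, mem_filter] at this; exact this.2
          rcases (hgspec (pi, pj)).2 with h | h
          · rw [hp.2] at h; exact absurd h (by simp)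
          · rw [hp.2] at h
            have : pj = Tcoord pi t := adj_inl_inr.mp h.symm
            exact Finset.mem_image.mpr ⟨pi, Finset.mem_erase.mpr ⟨hpi, mem_univ _⟩, by rw [← this]⟩
        refine (Finset.card_le_card hsub).trans ((Finset.card_image_le).trans ?_)
        rw [Finset.card_erase_of_mem (mem_univ _), Finset.card_univ, Fintype.card_fin]
    have hcount := Finset.card_le_mul_card_image_of_maps_to hmaps 2 hfib
    have hsrccard : src.card = 4*m := by
      have : src = (univ.erase i0) ×ˢ univ := by
        ext ⟨i, j⟩
        simp [hsrc, Finset.mem_product]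
      rw [this, Finset.card_product, Finset.card_erase_of_mem (mem_univ _), Finset.card_univ,
        Finset.card_univ, Fintype.card_fin, Fintype.card_fin]
      omega
    have htgtD : 2*m + tgt.card ≤ D.card := by
      have hdisj : Disjoint ((univ : Finset (Fin (2*m))).image fun j => inl (i0, j)) tgt := by
        rw [Finset.disjoint_left]
        rintro v hv hv'
        obtain ⟨j, -, rfl⟩ := Finset.mem_image.mp hv
        rw [htgt, mem_filter] at hv'
        exact hv'.2 j rfl
      have hsub2 : ((univ : Finset (Fin (2*m))).image fun j => inl (i0, j)) ∪ tgt ⊆ D := by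
        intro v hv
        rcases Finset.mem_union.mp hv with h | h
        · obtain ⟨j, -, rfl⟩ := Finset.mem_image.mp h
          exact hfull j
        · exact Finset.mem_of_mem_filter _ h
      have := Finset.card_le_card hsub2
      rw [Finset.card_union_of_disjoint hdisj,
        Finset.card_image_of_injective _ (fun a b hab => by simpa using hab),
        Finset.card_univ, Fintype.card_fin] at this
      exact this
    omega
  · push_neg at hfull
    set A : Fin 3 → Finset (Fin (2*m)) := fun i => univ.filter (fun j => inl (i, j) ∈ D) with hA
    set B := univ.filter
        (fun x : Σ t : Fin (2 * m) × Fin (2 * m) × Fin (2 * m), Fin (s t) => inr x ∈ D) with hB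
    set U := (univ \ A 0) ×ˢ ((univ \ A 1) ×ˢ (univ \ A 2)) with hU
    have hUB : ∀ t ∈ U, ∀ a : Fin (s t), (⟨t, a⟩ : Σ t, Fin (s t)) ∈ B := by
      intro t ht a
      rw [hU, Finset.mem_product, Finset.mem_product] at ht
      rw [hB, mem_filter]
      refine ⟨mem_univ _, ?_⟩
      by_contra hc
      obtain ⟨u, hu, hadj⟩ := hdom _ hc
      have hnotA : ∀ i, Tcoord i t ∉ A i := by
        intro i
        fin_cases i
        · simpa [Tcoord] using (Finset.mem_sdiff.mp ht.1).2
        · simpa [Tcoord] using (Finset.mem_sdiff.mp ht.2.1).2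
        · simpa [Tcoord] using (Finset.mem_sdiff.mp ht.2.2).2
      rcases u with ⟨i, j⟩ | x
      · have hj : j = Tcoord i t := adj_inl_inr.mp hadj
        subst hj
        exact hnotA i (by rw [hA]; exact mem_filter.mpr ⟨mem_univ _, hu⟩)
      · exact not_adj_inr_inr hadj
    have hsig : U.sigma (fun t => (univ : Finset (Fin (s t)))) ⊆ B := by
      rintro ⟨t, a⟩ hx
      rw [Finset.mem_sigma] at hx
      exact hUB t hx.1 a
    have hBcard : m * U.card ≤ B.card := by
      calc m * U.card = ∑ _t ∈ U, m := by rw [Finset.sum_const, smul_eq_mul, mul_comm]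
        _ ≤ ∑ t ∈ U, (univ : Finset (Fin (s t))).card := by
            refine Finset.sum_le_sum fun t _ => ?_
            rw [Finset.card_univ, Fintype.card_fin]; exact hs t
        _ = (U.sigma (fun t => (univ : Finset (Fin (s t))))).card := (Finset.card_sigma _ _).symm
        _ ≤ B.card := Finset.card_le_card hsig
    have hxc : ∀ i, (A i).card + (univ \ A i).card = 2*m := by
      intro i
      rw [Finset.card_sdiff_of_subset (Finset.subset_univ _), Finset.card_univ, Fintype.card_fin]
      have := Finset.card_le_card (Finset.subset_univ (A i))
      rw [Finset.card_univ, Fintype.card_fin] at this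
      omega
    have hx1 : ∀ i, 1 ≤ (univ \ A i).card := by
      intro i
      obtain ⟨j, hj⟩ := hfull i
      refine Finset.card_pos.mpr ⟨j, ?_⟩
      rw [Finset.mem_sdiff, hA]
      simp [hj]
    have hUcard : U.card = (univ \ A 0).card * ((univ \ A 1).card * (univ \ A 2).card) := by
      rw [hU, Finset.card_product, Finset.card_product]
    have hdec : D.card = (A 0).card + (A 1).card + (A 2).card + B.card := by
      rw [card_decomp m s D, Fin.sum_univ_three]
    -- arithmetic
    set x0 := (univ \ A 0).card
    set x1 := (univ \ A 1).card
    set x2 := (univ \ A 2).card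
    have hprod : x0 + x1 + x2 ≤ x0 * x1 * x2 + 2 :=
      sum_le_prod_add_two _ _ _ (hx1 0) (hx1 1) (hx1 2)
    have key : m * (x0 + x1 + x2) ≤ m * (x0 * x1 * x2) + 2 * m := by
      calc m * (x0 + x1 + x2) ≤ m * (x0 * x1 * x2 + 2) := Nat.mul_le_mul_left m hprod
        _ = m * (x0 * x1 * x2) + 2 * m := by ring
    have hSm : x0 + x1 + x2 ≤ m * (x0 + x1 + x2) := Nat.le_mul_of_pos_left _ (by omega)
    have h0 := hxc 0; have h1 := hxc 1; have h2 := hxc 2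
    have hB' : m * (x0 * x1 * x2) ≤ B.card := by
      rw [hUcard] at hBcard
      rw [mul_assoc]; exact hBcard
    -- goal : 4*m ≤ D.card
    have : 4*m ≤ (A 0).card + (A 1).card + (A 2).card + B.card := by
      nlinarith [key, hSm, hB', h0, h1, h2]
    omega

lemma rtd_lb (hm : 2 ≤ m) (hs : ∀ t, m ≤ s t)
    (f : ((Fin 3 × Fin (2 * m)) ⊕ (Σ t : Fin (2 * m) × Fin (2 * m) × Fin (2 * m), Fin (s t))) →
      Finset (Fin 3))
    (hf : IsKRDF (Tgraph m s) 3 f) : 6*m ≤ ∑ v, (f v).card := by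
  classical
  set S : Fin 3 → Fin 3 → Finset (Fin (2*m)) :=
    fun c i => univ.filter (fun j => c ∈ f (inl (i, j))) with hS
  set cov : Fin 3 → ℕ := fun c => ∑ i : Fin 3, (S c i).card with hcov
  have hWsplit : ∑ v, (f v).card = ∑ p : Fin 3 × Fin (2*m), (f (inl p)).card
      + ∑ x : Σ t : Fin (2 * m) × Fin (2 * m) × Fin (2 * m), Fin (s t), (f (inr x)).card :=
    Fintype.sum_sum_type _
  have hcard : ∀ v, (f v).card = ∑ c : Fin 3, if c ∈ f v then 1 else 0 := by
    intro v
    rw [← Finset.card_filter, Finset.filter_univ_mem]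
  have hWH : ∑ p : Fin 3 × Fin (2*m), (f (inl p)).card = cov 0 + cov 1 + cov 2 := by
    calc ∑ p : Fin 3 × Fin (2*m), (f (inl p)).card
        = ∑ p : Fin 3 × Fin (2*m), ∑ c : Fin 3, (if c ∈ f (inl p) then 1 else 0) :=
          Finset.sum_congr rfl fun p _ => hcard _
      _ = ∑ c : Fin 3, ∑ p : Fin 3 × Fin (2*m), (if c ∈ f (inl p) then 1 else 0) :=
          Finset.sum_comm
      _ = ∑ c : Fin 3, ∑ i : Fin 3, ∑ j : Fin (2*m), (if c ∈ f (inl (i, j)) then 1 else 0) :=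
          Finset.sum_congr rfl fun c _ => Fintype.sum_prod_type _
      _ = ∑ c : Fin 3, cov c := by
          refine Finset.sum_congr rfl fun c _ => ?_
          rw [hcov]
          exact Finset.sum_congr rfl fun i _ => (Finset.card_filter _ _).symm
      _ = cov 0 + cov 1 + cov 2 := Fin.sum_univ_three _
  have hempty : ∀ (c : Fin 3) (t : Fin (2 * m) × Fin (2 * m) × Fin (2 * m)),
      (∀ i, Tcoord i t ∉ S c i) → ∀ a : Fin (s t), f (inr ⟨t, a⟩) ≠ ∅ := by
    intro c t ht a hfa
    obtain ⟨u, hadj, hc⟩ := hf _ hfa c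
    rcases u with ⟨i, j⟩ | x
    · have hj : j = Tcoord i t := adj_inl_inr.mp hadj.symm
      subst hj
      exact ht i (by rw [hS]; exact mem_filter.mpr ⟨mem_univ _, hc⟩)
    · exact not_adj_inr_inr hadj
  by_cases hNF : ∀ c : Fin 3, ∃ i, S c i = univ
  · have hcovge : ∀ c, 2*m ≤ cov c := by
      intro c
      obtain ⟨i, hi⟩ := hNF c
      have : (S c i).card = 2*m := by rw [hi, Finset.card_univ, Fintype.card_fin]
      rw [hcov]
      calc 2*m = (S c i).card := this.symm
        _ ≤ ∑ i : Fin 3, (S c i).card :=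
          Finset.single_le_sum (f := fun i => (S c i).card) (fun _ _ => Nat.zero_le _) (mem_univ i)
    have h0 := hcovge 0; have h1 := hcovge 1; have h2 := hcovge 2
    rw [hWsplit, hWH]
    omega
  · push_neg at hNF
    obtain ⟨cbad, hcbad⟩ := hNF
    set NF := univ.filter (fun c : Fin 3 => ∀ i, S c i ≠ univ) with hNFdef
    have hNFne : NF.Nonempty := ⟨cbad, by rw [hNFdef, mem_filter]; exact ⟨mem_univ _, hcbad⟩⟩
    obtain ⟨c0, hc0mem, hc0min⟩ := Finset.exists_min_image NF cov hNFne
    have hc0 : ∀ i, S c0 i ≠ univ := by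
      rw [hNFdef, mem_filter] at hc0mem; exact hc0mem.2
    set x : Fin 3 → ℕ := fun i => (univ \ S c0 i).card with hx
    have hxc : ∀ i, (S c0 i).card + x i = 2*m := by
      intro i
      show (S c0 i).card + (univ \ S c0 i).card = 2*m
      rw [Finset.card_sdiff_of_subset (Finset.subset_univ _), Finset.card_univ, Fintype.card_fin]
      have := Finset.card_le_card (Finset.subset_univ (S c0 i))
      rw [Finset.card_univ, Fintype.card_fin] at this
      omega
    have hx1 : ∀ i, 1 ≤ x i := by
      intro i
      refine Finset.card_pos.mpr ?_
      rw [Finset.sdiff_nonempty]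
      intro hsub
      exact hc0 i (Finset.univ_subset_iff.mp hsub)
    set U := (univ \ S c0 0) ×ˢ ((univ \ S c0 1) ×ˢ (univ \ S c0 2)) with hU
    have hUt : ∀ t ∈ U, ∀ i, Tcoord i t ∉ S c0 i := by
      intro t ht i
      rw [hU, Finset.mem_product, Finset.mem_product] at ht
      fin_cases i
      · simpa [Tcoord] using (Finset.mem_sdiff.mp ht.1).2
      · simpa [Tcoord] using (Finset.mem_sdiff.mp ht.2.1).2
      · simpa [Tcoord] using (Finset.mem_sdiff.mp ht.2.2).2
    have hWI : m * U.card ≤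
        ∑ x : Σ t : Fin (2 * m) × Fin (2 * m) × Fin (2 * m), Fin (s t), (f (inr x)).card := by
      rw [← Finset.univ_sigma_univ, Finset.sum_sigma]
      calc m * U.card = ∑ _t ∈ U, m := by rw [Finset.sum_const, smul_eq_mul, mul_comm]
        _ ≤ ∑ t ∈ U, ∑ a : Fin (s t), (f (inr ⟨t, a⟩)).card := by
            refine Finset.sum_le_sum fun t ht => ?_
            calc m ≤ s t := hs t
              _ = ∑ _a : Fin (s t), 1 := by
                  rw [Finset.sum_const, smul_eq_mul, mul_one, Finset.card_univ, Fintype.card_fin]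
              _ ≤ ∑ a : Fin (s t), (f (inr ⟨t, a⟩)).card := by
                  refine Finset.sum_le_sum fun a _ => ?_
                  exact Finset.card_pos.mpr
                    (Finset.nonempty_iff_ne_empty.mpr (hempty c0 t (hUt t ht) a))
        _ ≤ ∑ t : Fin (2 * m) × Fin (2 * m) × Fin (2 * m), ∑ a : Fin (s t), (f (inr ⟨t, a⟩)).card :=
            Finset.sum_le_sum_of_subset (Finset.subset_univ _)
    have hUcard : U.card = x 0 * (x 1 * x 2) := by
      rw [hU, hx, Finset.card_product, Finset.card_product]
    have hcovmin : ∀ c, min (cov c0) (2*m) ≤ cov c := by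
      intro c
      by_cases hc : ∀ i, S c i ≠ univ
      · exact le_trans (min_le_left _ _)
          (hc0min c (by rw [hNFdef, mem_filter]; exact ⟨mem_univ _, hc⟩))
      · push_neg at hc
        obtain ⟨i, hi⟩ := hc
        refine le_trans (min_le_right _ _) ?_
        have : (S c i).card = 2*m := by rw [hi, Finset.card_univ, Fintype.card_fin]
        rw [hcov]
        calc 2*m = (S c i).card := this.symm
          _ ≤ ∑ i : Fin 3, (S c i).card :=
            Finset.single_le_sum (f := fun i => (S c i).card) (fun _ _ => Nat.zero_le _) (mem_univ i)
    -- arithmetic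
    have hsum3 : cov c0 + 2 * min (cov c0) (2*m) ≤ cov 0 + cov 1 + cov 2 := by
      rw [← Fin.sum_univ_three cov, ← Finset.sum_erase_add univ cov (mem_univ c0)]
      have h2 : 2 * min (cov c0) (2*m) ≤ ∑ c ∈ univ.erase c0, cov c := by
        have := Finset.card_nsmul_le_sum (univ.erase c0) cov (min (cov c0) (2*m))
          (fun c _ => hcovmin c)
        rwa [Finset.card_erase_of_mem (mem_univ _), Finset.card_univ, Fintype.card_fin,
          smul_eq_mul] at this
      omega
    have hCS : cov c0 + (x 0 + x 1 + x 2) = 6*m := by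
      have h0 := hxc 0; have h1 := hxc 1; have h2 := hxc 2
      show (∑ i : Fin 3, (S c0 i).card) + (x 0 + x 1 + x 2) = 6*m
      rw [Fin.sum_univ_three]
      omega
    have hprodx : x 0 + x 1 + x 2 ≤ x 0 * x 1 * x 2 + 2 :=
      sum_le_prod_add_two _ _ _ (hx1 0) (hx1 1) (hx1 2)
    rw [hWsplit, hWH]
    have hWI' : m * (x 0 * (x 1 * x 2)) ≤
        ∑ x : Σ t : Fin (2 * m) × Fin (2 * m) × Fin (2 * m), Fin (s t), (f (inr x)).card := by
      rw [← hUcard]; exact hWI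
    rcases le_total (cov c0) (2*m) with hle | hle
    · rw [min_eq_left hle] at hsum3
      have key : m * (x 0 + x 1 + x 2) ≤ m * (x 0 * (x 1 * x 2)) + 2 * m := by
        calc m * (x 0 + x 1 + x 2) ≤ m * (x 0 * x 1 * x 2 + 2) := Nat.mul_le_mul_left m hprodx
          _ = m * (x 0 * (x 1 * x 2)) + 2 * m := by ring
      have hmul1 : m * (cov c0) + m * (x 0 + x 1 + x 2) = 6 * (m * m) := by
        rw [← Nat.mul_add, hCS]; ring
      have hmul2 : m * (cov c0) ≤ 2 * (m * m) := by
        calc m * cov c0 ≤ m * (2*m) := Nat.mul_le_mul_left m hle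
          _ = 2 * (m * m) := by ring
      have hmul3 : 2 * m ≤ m * m := by
        calc 2 * m = m * 2 := by ring
          _ ≤ m * m := Nat.mul_le_mul_left m hm
      nlinarith [hsum3, hWI', key, hmul1, hmul2, hmul3]
    · rw [min_eq_right hle] at hsum3
      have : (0:ℕ) ≤ m * (x 0 * (x 1 * x 2)) := Nat.zero_le _
      linarith [hsum3, hWI']

end TgraphAux

theorem rtdnum_Tgraph (m : ℕ) (hm : 2 ≤ m)
    (s : Fin (2 * m) × Fin (2 * m) × Fin (2 * m) → ℕ) (hs : ∀ t, m ≤ s t) :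
    2 * rtdnum (Tgraph m s) 3 = 3 * domnum (Tgraph m s) := by
  have hdomv : domnum (Tgraph m s) = 4*m := by
    apply le_antisymm
    · exact Nat.sInf_le ⟨D0 m s, D0_dom m s, D0_card m s⟩
    · refine le_csInf ⟨4*m, D0 m s, D0_dom m s, D0_card m s⟩ ?_
      rintro n ⟨D, hD, rfl⟩
      exact dom_lb m s hm D hs hD
  have hrtdv : rtdnum (Tgraph m s) 3 = 6*m := by
    apply le_antisymm
    · exact Nat.sInf_le ⟨f0 m s, f0_krtdf m s, f0_sum m s⟩
    · refine le_csInf ⟨6*m, f0 m s, f0_krtdf m s, f0_sum m s⟩ ?_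
      rintro n ⟨f, hf, rfl⟩
      exact rtd_lb m s hm hs f hf.1
  rw [hdomv, hrtdv]
  ring
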